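/- Let x be a collision-free solution of the first-order singular Cucker–Smale system with β > 1, and set D_ν = max_i ν_i − min_i ν_i. Then the position diameter D_x(t) = max_i x_i(t) − min_i x_i(t) satisfies D_x(t) ≥ C_L for all t ≥ 0, where C_L = min{ 1, D_x(0), (1 + N·D_ν·(β−1)/(2κ))^{−1/(β−1)} }. -/

import Mathlib

open Real Filter Set Topology

/-- The potential function `Φ(x) = sign(x)·(β−1)⁻¹(1 − |x|^{1−β})` (with `Φ(0)=0`). -/
noncomputable def PhiCS (β y : ℝ) : ℝ := Real.sign y * (1 - |y| ^ (1 - β)) / (β - 1)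

/-- A collision-free solution on `[0,∞)` of the first-order singular Cucker–Smale
system with short-range interaction:
`x_i'(t) = ν_i + (κ/N) Σ_{k≠i} Φ(x_k(t) − x_i(t))`, with `Σ_i x_i(0) = 0` and no
collisions for all `t ≥ 0`. -/
def IsCFSol (N : ℕ) (β κ : ℝ) (ν : Fin N → ℝ) (x : ℝ → Fin N → ℝ) : Prop :=
  (∀ t ≥ (0:ℝ), ∀ i j : Fin N, i ≠ j → x t i ≠ x t j) ∧
  (∑ i, x 0 i = 0) ∧
  ∀ i, ∀ t ≥ (0:ℝ), HasDerivWithinAt (fun s => x s i)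
    (ν i + (κ / (N:ℝ)) * ∑ k ∈ Finset.univ.erase i, PhiCS β (x t k - x t i)) (Set.Ici 0) t

/-- The diameter of a configuration `y : Fin N → ℝ`. -/
noncomputable def diam {N : ℕ} (y : Fin N → ℝ) : ℝ := ⨆ i, ⨆ j, (y i - y j)

section helpers
variable {N : ℕ} [NeZero N]

lemma le_diam (y : Fin N → ℝ) (i j : Fin N) : y i - y j ≤ diam y := by
  have h1 : y i - y j ≤ ⨆ j, (y i - y j) :=
    le_ciSup (Set.Finite.bddAbove (Set.finite_range (fun j => y i - y j))) j
  have h2 : (⨆ j, (y i - y j)) ≤ ⨆ i, ⨆ j, (y i - y j) :=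
    le_ciSup (Set.Finite.bddAbove (Set.finite_range (fun i => ⨆ j, (y i - y j)))) i
  exact h1.trans h2

lemma diam_nonneg (y : Fin N → ℝ) : 0 ≤ diam y := by
  have i : Fin N := Classical.arbitrary _
  simpa using le_diam y i i

lemma diam_le {y : Fin N → ℝ} {c : ℝ} (h : ∀ i j, y i - y j ≤ c) : diam y ≤ c :=
  ciSup_le fun i => ciSup_le fun j => h i j

lemma diam_eq_sup' (y : Fin N → ℝ) : diam y =
    Finset.univ.sup' Finset.univ_nonempty
      (fun i => Finset.univ.sup' Finset.univ_nonempty (fun j => y i - y j)) := by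
  rw [diam, ← Finset.sup'_univ_eq_ciSup]
  congr 1
  ext i
  rw [← Finset.sup'_univ_eq_ciSup]

lemma contOn_diam {x : ℝ → Fin N → ℝ}
    (hc : ∀ i, ContinuousOn (fun t => x t i) (Set.Ici 0)) :
    ContinuousOn (fun t => diam (x t)) (Set.Ici 0) := by
  simp_rw [diam_eq_sup']
  apply ContinuousOn.finset_sup'_apply (f := fun i t => Finset.univ.sup' Finset.univ_nonempty
      (fun j => x t i - x t j)) Finset.univ_nonempty
  intro i _
  apply ContinuousOn.finset_sup'_apply (f := fun j t => x t i - x t j) Finset.univ_nonempty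
  intro j _
  exact (hc i).sub (hc j)

end helpers

lemma phiCS_neg (β y : ℝ) : PhiCS β (-y) = - PhiCS β y := by
  simp only [PhiCS, Real.sign_neg, abs_neg]
  ring

lemma phiCS_of_pos {β y : ℝ} (hy : 0 < y) : PhiCS β y = (1 - y ^ (1 - β)) / (β - 1) := by
  rw [PhiCS, Real.sign_of_pos hy, abs_of_pos hy, one_mul]

lemma phiCS_mono {β : ℝ} (hβ : 1 < β) {a b : ℝ} (ha : 0 < a) (hab : a ≤ b) :
    PhiCS β a ≤ PhiCS β b := by
  have hb : 0 < b := ha.trans_le hab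
  rw [phiCS_of_pos ha, phiCS_of_pos hb]
  have h1 : b ^ (1 - β) ≤ a ^ (1 - β) :=
    Real.rpow_le_rpow_of_nonpos ha hab (by linarith)
  have hβ1 : (0:ℝ) ≤ β - 1 := by linarith
  gcongr

lemma phiCS_neg_of_lt_one {β : ℝ} (hβ : 1 < β) {y : ℝ} (h0 : 0 < y) (h1 : y < 1) :
    PhiCS β y < 0 := by
  rw [phiCS_of_pos h0]
  have : 1 < y ^ (1 - β) := by
    rw [Real.one_lt_rpow_iff_of_pos h0]
    right; exact ⟨h1, by linarith⟩
  apply div_neg_of_neg_of_pos (by linarith) (by linarith)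

lemma phiCS_lt_threshold {β κ Dν : ℝ} (hβ : 1 < β) (hκ : 0 < κ) (hDν : 0 ≤ Dν) (M : ℝ)
    (hM : 0 ≤ M) {D : ℝ} (hD0 : 0 < D)
    (hDlt : D < (1 + M * Dν * (β - 1) / (2 * κ)) ^ (-(1 / (β - 1)))) :
    PhiCS β D < -(M * Dν / (2 * κ)) := by
  have hβ1 : (0:ℝ) < β - 1 := by linarith
  have hX : 0 ≤ M * Dν * (β - 1) / (2 * κ) :=
    div_nonneg (mul_nonneg (mul_nonneg hM hDν) hβ1.le) (by linarith)
  have hA0 : (0:ℝ) < 1 + M * Dν * (β - 1) / (2 * κ) := by linarith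
  have key : 1 + M * Dν * (β - 1) / (2 * κ) < D ^ (1 - β) := by
    have h2 := Real.rpow_lt_rpow_of_neg hD0 hDlt (by linarith : 1 - β < 0)
    rwa [← Real.rpow_mul hA0.le, show (-(1 / (β - 1))) * (1 - β) = 1 by field_simp; ring,
      Real.rpow_one] at h2
  rw [phiCS_of_pos hD0]
  rw [div_lt_iff₀ hβ1]
  have : -(M * Dν / (2 * κ)) * (β - 1) = -(M * Dν * (β-1) / (2 * κ)) := by ring
  rw [this]
  linarith


set_option maxHeartbeats 1000000 in
/-- Uniform-in-time lower bound for the position diameter when `β > 1`: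
`D_x(t) ≥ C_L = min{1, D_x(0), Φ⁻¹(−N·D_ν/(2κ))}`. -/
theorem stmt9 (N : ℕ) (hN : 2 ≤ N) (β κ : ℝ) (hβ : 1 < β) (hκ : 0 < κ)
    (ν : Fin N → ℝ) (hν : ∑ i, ν i = 0)
    (x : ℝ → Fin N → ℝ) (hx : IsCFSol N β κ ν x) :
    ∀ t ≥ (0:ℝ),
      min 1 (min (diam (x 0))
        ((1 + (N:ℝ) * (diam ν) * (β - 1) / (2 * κ)) ^ (-(1 / (β - 1)))))
      ≤ diam (x t) := by
  haveI : NeZero N := ⟨by omega⟩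
  by_contra hcon
  push_neg at hcon
  obtain ⟨t₀, ht₀0, ht₀⟩ := hcon
  obtain ⟨hcoll, -, hode⟩ := hx
  set CL := min 1 (min (diam (x 0))
      ((1 + (N:ℝ) * (diam ν) * (β - 1) / (2 * κ)) ^ (-(1 / (β - 1))))) with hCLdef
  have hci : ∀ i, ContinuousOn (fun t => x t i) (Set.Ici 0) :=
    fun i t ht => (hode i t ht).continuousWithinAt
  have hg : ContinuousOn (fun t => diam (x t)) (Set.Ici 0) := contOn_diam hci
  set c := (diam (x t₀) + CL) / 2 with hcdef
  have hc1 : diam (x t₀) < c := by simp only [hcdef]; linarith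
  have hc2 : c < CL := by simp only [hcdef]; linarith
  have hc0 : 0 < c := (diam_nonneg (x t₀)).trans_lt hc1
  have hc1' : c < 1 := hc2.trans_le (min_le_left _ _)
  have hcx0 : c < diam (x 0) := hc2.trans_le ((min_le_right _ _).trans (min_le_left _ _))
  have hcth : c < (1 + (N:ℝ) * (diam ν) * (β - 1) / (2 * κ)) ^ (-(1 / (β - 1))) :=
    hc2.trans_le ((min_le_right _ _).trans (min_le_right _ _))
  set S := {t : ℝ | t ∈ Set.Icc 0 t₀ ∧ c ≤ diam (x t)} with hSdef
  have h0S : (0:ℝ) ∈ S := ⟨⟨le_refl 0, ht₀0⟩, hcx0.le⟩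
  have hSne : S.Nonempty := ⟨0, h0S⟩
  have hSbdd : BddAbove S := ⟨t₀, fun t ht => ht.1.2⟩
  have hSclosed : IsClosed S := by
    have hEq : S = Set.Icc 0 t₀ ∩ (fun t => diam (x t)) ⁻¹' (Set.Ici c) := by
      ext t; simp [hSdef, Set.mem_Icc, and_assoc]
    rw [hEq]
    exact ContinuousOn.preimage_isClosed_of_isClosed
      (hg.mono Set.Icc_subset_Ici_self) isClosed_Icc isClosed_Ici
  set s := sSup S with hsdef
  have hsS : s ∈ S := hSclosed.csSup_mem hSne hSbdd
  have hs0 : 0 ≤ s := hsS.1.1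
  have hslt : s < t₀ := by
    rcases lt_or_eq_of_le hsS.1.2 with h | h
    · exact h
    · exfalso; rw [h] at hsS; exact absurd hsS.2 (not_le.mpr hc1)
  have hafter : ∀ t, s < t → t ≤ t₀ → diam (x t) < c := by
    intro t hts htt₀
    by_contra hle; push_neg at hle
    exact absurd (le_csSup hSbdd ⟨⟨hs0.trans hts.le, htt₀⟩, hle⟩) (not_le.mpr hts)
  have hgsle : diam (x s) ≤ c := by
    have htend : Tendsto (fun t => diam (x t)) (𝓝[Set.Ioi s] s) (𝓝 (diam (x s))) :=
      (hg s hs0).mono (fun t (ht : t ∈ Set.Ioi s) => (hs0.trans ht.le : (0:ℝ) ≤ t))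
    apply le_of_tendsto htend
    filter_upwards [Ioo_mem_nhdsGT_of_mem (Set.mem_Ico.mpr ⟨le_refl s, hslt⟩)] with t ht
    exact (hafter t ht.1 ht.2.le).le
  have hgs : diam (x s) = c := le_antisymm hgsle hsS.2
  -- extremal indices
  obtain ⟨i, hi⟩ := Finite.exists_max (x s)
  obtain ⟨j, hj⟩ := Finite.exists_min (x s)
  have hdle : diam (x s) ≤ x s i - x s j := diam_le fun a b => by
    have h1 := hi a; have h2 := hj b; linarith
  have hfs : x s i - x s j = c := le_antisymm (hgs ▸ le_diam (x s) i j) (hgs ▸ hdle)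
  -- Phi bounds
  have hΦneg : PhiCS β c < 0 := phiCS_neg_of_lt_one hβ hc0 hc1'
  have hΦth : PhiCS β c < -((N:ℝ) * diam ν / (2 * κ)) :=
    phiCS_lt_threshold hβ hκ (diam_nonneg ν) (N:ℝ) (Nat.cast_nonneg N) hc0 hcth
  -- pointwise sum bounds
  have hSi : ∀ k ∈ Finset.univ.erase i, -(PhiCS β c) ≤ PhiCS β (x s k - x s i) := by
    intro k hk
    have hkne : x s k ≠ x s i := hcoll s hs0 k i (Finset.ne_of_mem_erase hk)
    have hklt : x s k < x s i := lt_of_le_of_ne (hi k) hkne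
    have hle : x s i - x s k ≤ c := by have := hj k; linarith
    have hmono : PhiCS β (x s i - x s k) ≤ PhiCS β c := phiCS_mono hβ (by linarith) hle
    have hneg := phiCS_neg β (x s i - x s k)
    rw [neg_sub] at hneg
    linarith
  have hSj : ∀ k ∈ Finset.univ.erase j, PhiCS β (x s k - x s j) ≤ PhiCS β c := by
    intro k hk
    have hkne : x s k ≠ x s j := hcoll s hs0 k j (Finset.ne_of_mem_erase hk)
    have hkgt : x s j < x s k := lt_of_le_of_ne (hj k) (Ne.symm hkne)
    have hle : x s k - x s j ≤ c := by have := hi k; linarith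
    exact phiCS_mono hβ (by linarith) hle
  -- sum bounds
  have hcardi : ((Finset.univ.erase i).card : ℝ) = (N:ℝ) - 1 := by
    rw [Finset.card_erase_of_mem (Finset.mem_univ i), Finset.card_univ, Fintype.card_fin]
    rw [Nat.cast_sub (by omega)]; norm_num
  have hcardj : ((Finset.univ.erase j).card : ℝ) = (N:ℝ) - 1 := by
    rw [Finset.card_erase_of_mem (Finset.mem_univ j), Finset.card_univ, Fintype.card_fin]
    rw [Nat.cast_sub (by omega)]; norm_num
  have hsumi : ((N:ℝ) - 1) * (-(PhiCS β c)) ≤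
      ∑ k ∈ Finset.univ.erase i, PhiCS β (x s k - x s i) := by
    have := Finset.card_nsmul_le_sum (Finset.univ.erase i) _ _ hSi
    rwa [nsmul_eq_mul, hcardi] at this
  have hsumj : (∑ k ∈ Finset.univ.erase j, PhiCS β (x s k - x s j)) ≤
      ((N:ℝ) - 1) * PhiCS β c := by
    have := Finset.sum_le_card_nsmul (Finset.univ.erase j) _ _ hSj
    rwa [nsmul_eq_mul, hcardj] at this
  have hνij : -(diam ν) ≤ ν i - ν j := by have := le_diam ν j i; linarith
  -- derivative positivity
  have hder : HasDerivWithinAt (fun t => x t i - x t j)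
      ((ν i + (κ / (N:ℝ)) * ∑ k ∈ Finset.univ.erase i, PhiCS β (x s k - x s i)) -
       (ν j + (κ / (N:ℝ)) * ∑ k ∈ Finset.univ.erase j, PhiCS β (x s k - x s j)))
      (Set.Ici s) s :=
    ((hode i s hs0).sub (hode j s hs0)).mono (Set.Ici_subset_Ici.mpr hs0)
  set d := (ν i + (κ / (N:ℝ)) * ∑ k ∈ Finset.univ.erase i, PhiCS β (x s k - x s i)) -
       (ν j + (κ / (N:ℝ)) * ∑ k ∈ Finset.univ.erase j, PhiCS β (x s k - x s j)) with hddef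
  have hN2 : (2:ℝ) ≤ (N:ℝ) := by exact_mod_cast hN
  have hNpos : (0:ℝ) < (N:ℝ) := by linarith
  have hκN : 0 < κ / (N:ℝ) := by positivity
  have hdpos : 0 < d := by
    set Si := ∑ k ∈ Finset.univ.erase i, PhiCS β (x s k - x s i)
    set Sj := ∑ k ∈ Finset.univ.erase j, PhiCS β (x s k - x s j)
    set Φ := PhiCS β c
    have hP : 0 < -Φ := by linarith
    have h1 : 2 * ((N:ℝ) - 1) * (-Φ) ≤ Si - Sj := by linarith
    have h2 : (N:ℝ) * (-Φ) ≤ 2 * ((N:ℝ) - 1) * (-Φ) := by nlinarith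
    have h3 : (κ / (N:ℝ)) * ((N:ℝ) * (-Φ)) ≤ (κ / (N:ℝ)) * (Si - Sj) := by
      apply mul_le_mul_of_nonneg_left (h2.trans h1) hκN.le
    have h4 : (κ / (N:ℝ)) * ((N:ℝ) * (-Φ)) = κ * (-Φ) := by field_simp
    have h5 : κ * ((N:ℝ) * diam ν / (2 * κ)) < κ * (-Φ) := by
      apply mul_lt_mul_of_pos_left (by linarith) hκ
    have h6 : κ * ((N:ℝ) * diam ν / (2 * κ)) = (N:ℝ) * diam ν / 2 := by field_simp
    have h7 : diam ν ≤ (N:ℝ) * diam ν / 2 := by nlinarith [diam_nonneg ν]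
    have h8 : diam ν < (κ / (N:ℝ)) * (Si - Sj) := by linarith
    rw [hddef]
    have hexp : ν i + κ / (N:ℝ) * Si - (ν j + κ / (N:ℝ) * Sj)
        = (ν i - ν j) + (κ / (N:ℝ) * (Si - Sj)) := by ring
    rw [hexp]
    linarith
  -- contradiction via slope
  rw [hasDerivWithinAt_iff_tendsto_slope, Set.Ici_sdiff_left] at hder
  have hev1 : ∀ᶠ t in 𝓝[Set.Ioi s] s, 0 < slope (fun t => x t i - x t j) s t :=
    hder.eventually (eventually_gt_nhds hdpos)
  have hev2 : Set.Ioo s t₀ ∈ 𝓝[Set.Ioi s] s :=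
    Ioo_mem_nhdsGT_of_mem (Set.mem_Ico.mpr ⟨le_refl s, hslt⟩)
  obtain ⟨t, hslope, htIoo⟩ := (hev1.and (eventually_of_mem hev2 (fun t ht => ht))).exists
  have hst : s < t := htIoo.1
  have hts : (0:ℝ) < t - s := by linarith
  have hfgt : c < x t i - x t j := by
    rw [slope_def_field] at hslope
    have hmul := mul_pos hslope hts
    rw [div_mul_cancel₀ _ (by linarith : t - s ≠ 0)] at hmul
    have : x s i - x s j = c := hfs
    linarith
  have hlt := hafter t hst htIoo.2.le
  have hle := le_diam (x t) i j
  linarith
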